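/- Let A ∈ ℝ^{m×n}, b ∈ ℝᵐ, δ ≥ 0, and let v ∈ ℝⁿ be a vector with components in {0, 1}. If the set {x ∈ ℝⁿ : ‖Ax − b‖ ≤ δ} is nonempty, then the weighted l₁-norm minimization problem min { ⟨v, |x|⟩ : ‖Ax − b‖ ≤ δ } attains its infimum, i.e., there exists a feasible x̃ with ⟨v, |x̃|⟩ ≤ ⟨v, |x|⟩ for every feasible x. -/

import Mathlib

/-- The Euclidean norm of a vector in `ℝᵐ`. -/
noncomputable def enorm₂ {m : ℕ} (u : Fin m → ℝ) : ℝ := Real.sqrt (∑ i, u i ^ 2)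

/-- for a weight vector `v` with components in `{0, 1}`, if the feasible set
`{x : ‖Ax − b‖ ≤ δ}` is nonempty, then the weighted `l₁`-norm minimization problem
`min { ⟨v, |x|⟩ : ‖Ax − b‖ ≤ δ }` attains its infimum. -/
theorem weighted_l1_attains_min {m n : ℕ} (A : Matrix (Fin m) (Fin n) ℝ)
    (b : Fin m → ℝ) (δ : ℝ) (hδ : 0 ≤ δ)
    (v : Fin n → ℝ) (hv : ∀ i, v i = 0 ∨ v i = 1)
    (hne : ∃ x : Fin n → ℝ, enorm₂ (A.mulVec x - b) ≤ δ) :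
    ∃ xt : Fin n → ℝ, enorm₂ (A.mulVec xt - b) ≤ δ ∧
      ∀ x : Fin n → ℝ, enorm₂ (A.mulVec x - b) ≤ δ →
        (∑ i, v i * |xt i|) ≤ ∑ i, v i * |x i| := by
  classical
  obtain ⟨x₀, hx₀⟩ := hne
  let e : (Fin m → ℝ) ≃ₗ[ℝ] EuclideanSpace ℝ (Fin m) :=
    (WithLp.linearEquiv 2 ℝ (Fin m → ℝ)).symm
  have he : ∀ u : Fin m → ℝ, enorm₂ u = ‖e u‖ := by
    intro u
    rw [EuclideanSpace.norm_eq]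
    simp [enorm₂, Real.norm_eq_abs, sq_abs, e, WithLp.linearEquiv]
  let L : (Fin n → ℝ) →ₗ[ℝ] EuclideanSpace ℝ (Fin m) := e.toLinearMap ∘ₗ A.mulVecLin
  have hLc : Continuous L := L.continuous_of_finiteDimensional
  let U : Submodule ℝ (Fin n → ℝ) :=
    { carrier := {x | ∀ i, v i = 1 → x i = 0}
      add_mem' := by intro a b ha hb i hi; simp [Pi.add_apply, ha i hi, hb i hi]
      zero_mem' := by intro i _; rfl
      smul_mem' := by intro c a ha i hi; simp [ha i hi] }
  let W : Submodule ℝ (EuclideanSpace ℝ (Fin m)) := U.map L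
  let g : (Fin n → ℝ) → ℝ := fun y => ∑ i, v i * |y i|
  have hgc : Continuous g :=
    continuous_finset_sum _ fun i _ => continuous_const.mul (continuous_apply i).abs
  have hg0 : ∀ y, 0 ≤ g y := by
    intro y
    apply Finset.sum_nonneg
    intro i _
    rcases hv i with h | h <;> simp [h, abs_nonneg]
  let D : (Fin n → ℝ) → ℝ := fun y => Metric.infDist (L y - e b) (W : Set (EuclideanSpace ℝ (Fin m)))
  have hDc : Continuous D :=
    (Metric.continuous_infDist_pt _).comp (hLc.sub continuous_const)
  let π : (Fin n → ℝ) → (Fin n → ℝ) := fun x i => v i * x i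
  have hπU : ∀ x, π x - x ∈ U := by
    intro x i hi; simp [π, hi]
  have hgπ : ∀ x, g (π x) = ∑ i, v i * |x i| := by
    intro x; apply Finset.sum_congr rfl; intro i _
    rcases hv i with h | h <;> simp [π, g, h]
  have hDπ : ∀ x, enorm₂ (A.mulVec x - b) ≤ δ → D (π x) ≤ δ := by
    intro x hx
    have hw : L (π x - x) ∈ W := ⟨π x - x, hπU x, rfl⟩
    calc D (π x) ≤ dist (L (π x) - e b) (L (π x - x)) := Metric.infDist_le_dist_of_mem hw
      _ = ‖e (A.mulVec x - b)‖ := by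
          rw [dist_eq_norm, map_sub]
          congr 1
          simp only [L, LinearMap.coe_comp, Function.comp_apply, LinearEquiv.coe_coe,
            Matrix.mulVecLin_apply, ← map_sub]
          congr 1
          abel
      _ ≤ δ := by rw [← he]; exact hx
  set c := g (π x₀) with hc
  have hc0 : 0 ≤ c := hg0 _
  let P : Set (Fin n → ℝ) := {y | (∀ i, v i = 0 → y i = 0) ∧ D y ≤ δ ∧ g y ≤ c}
  have hPne : (π x₀) ∈ P := by
    refine ⟨fun i hi => by simp [π, hi], hDπ x₀ hx₀, le_refl _⟩
  have hPclosed : IsClosed P := by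
    have h1 : IsClosed {y : Fin n → ℝ | ∀ i, v i = 0 → y i = 0} := by
      have : {y : Fin n → ℝ | ∀ i, v i = 0 → y i = 0} =
          ⋂ i ∈ {i | v i = 0}, {y : Fin n → ℝ | y i = 0} := by
        ext y; simp [Set.mem_iInter]
      rw [this]
      exact isClosed_biInter fun i _ => isClosed_eq (continuous_apply i) continuous_const
    have h2 : IsClosed {y : Fin n → ℝ | D y ≤ δ} := isClosed_le hDc continuous_const
    have h3 : IsClosed {y : Fin n → ℝ | g y ≤ c} := isClosed_le hgc continuous_const
    exact (h1.inter (h2.inter h3))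
  have hPsub : P ⊆ Metric.closedBall (0 : Fin n → ℝ) c := by
    intro y hy
    rw [Metric.mem_closedBall, dist_pi_le_iff hc0]
    intro i
    rw [Real.dist_eq, Pi.zero_apply, sub_zero]
    rcases hv i with h | h
    · rw [hy.1 i h]; simpa using hc0
    · have : v i * |y i| ≤ g y := by
        apply Finset.single_le_sum (f := fun j => v j * |y j|) _ (Finset.mem_univ i)
        intro j _
        rcases hv j with hj | hj <;> simp [hj, abs_nonneg]
      rw [h, one_mul] at this
      exact this.trans hy.2.2
  have hPcpt : IsCompact P :=
    (isCompact_closedBall (0 : Fin n → ℝ) c).of_isClosed_subset hPclosed hPsub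
  obtain ⟨y₁, hy₁P, hy₁min⟩ := hPcpt.exists_isMinOn ⟨π x₀, hPne⟩ hgc.continuousOn
  -- attain the distance
  have hWclosed : IsClosed (W : Set (EuclideanSpace ℝ (Fin m))) :=
    Submodule.closed_of_finiteDimensional W
  obtain ⟨w, hwW, hwd⟩ :=
    hWclosed.exists_infDist_eq_dist ⟨0, W.zero_mem⟩ (L y₁ - e b)
  obtain ⟨z, hzU, hzw⟩ := hwW
  refine ⟨y₁ - z, ?_, ?_⟩
  · rw [he]
    have : e (A.mulVec (y₁ - z) - b) = (L y₁ - e b) - w := by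
      rw [← hzw]
      simp only [L, LinearMap.coe_comp, Function.comp_apply, LinearEquiv.coe_coe,
        Matrix.mulVecLin_apply, ← map_sub]
      congr 1
      rw [Matrix.mulVec_sub]
      abel
    rw [this, ← dist_eq_norm, ← hwd]
    exact hy₁P.2.1
  · intro x hx
    have hobj : (∑ i, v i * |y₁ i - z i|) = g y₁ := by
      apply Finset.sum_congr rfl
      intro i _
      rcases hv i with h | h
      · simp [g, h]
      · simp [g, hzU i h]
    have key : g y₁ ≤ ∑ i, v i * |x i| := by
      rw [← hgπ x]
      by_cases hcase : g (π x) ≤ c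
      · exact hy₁min ⟨fun i hi => by simp [π, hi], hDπ x hx, hcase⟩
      · have h1 : g y₁ ≤ c := hy₁min hPne
        linarith
    calc (∑ i, v i * |y₁ i - z i|) = g y₁ := hobj
      _ ≤ ∑ i, v i * |x i| := key
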